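/- The resolvent has a small singular value: if σ_k > 1 + ‖W₁‖ and I − W is invertible, then there exists a unit vector x ∈ ℝ^N such that ‖(I − W)⁻¹ x‖ ≤ 1/(σ_k − 1 − ‖W₁‖). -/

import Mathlib

open Matrix

/-- A vector of `ℝ^n` regarded as an element of Euclidean space, so that `‖euc x‖`
is the Euclidean (`ℓ²`) norm of `x`. -/
noncomputable def euc {n : ℕ} (x : Fin n → ℝ) : EuclideanSpace ℝ (Fin n) := WithLp.toLp 2 x

/-- The operator norm of a square matrix acting on Euclidean space by
matrix–vector multiplication. -/
noncomputable def l2OpNorm {n : ℕ} (M : Matrix (Fin n) (Fin n) ℝ) : ℝ :=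
  ‖Matrix.toEuclideanCLM (𝕜 := ℝ) M‖

lemma euc_mulVec_le {n : ℕ} (M : Matrix (Fin n) (Fin n) ℝ) (y : Fin n → ℝ) :
    ‖euc (M.mulVec y)‖ ≤ l2OpNorm M * ‖euc y‖ := by
  have h := (Matrix.toEuclideanCLM (𝕜 := ℝ) M).le_opNorm (euc y)
  have h2 : Matrix.toEuclideanCLM (𝕜 := ℝ) M (euc y) = euc (M.mulVec y) := rfl
  rw [h2] at h
  exact h

/-- The resolvent has a small singular value: if `σ_k > 1 + ‖W₁‖` and `I - W` is
invertible, then there is a unit vector `x` with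
`‖(I - W)⁻¹ x‖ ≤ 1/(σ_k - 1 - ‖W₁‖)`. -/
theorem resolvent_small_singular_value
    (N r : ℕ) (hr : 1 ≤ r) (hNr : r ≤ N)
    (U V : Matrix (Fin N) (Fin r) ℝ)
    (hU : Uᵀ * U = 1) (hV : Vᵀ * V = 1)
    (σ : Fin r → ℝ) (hσ : ∀ j, 0 < σ j)
    (W₁ : Matrix (Fin N) (Fin N) ℝ)
    (W : Matrix (Fin N) (Fin N) ℝ)
    (hW : W = U * Matrix.diagonal σ * Vᵀ + W₁)
    (k : Fin r)
    (uk vk xa za : Fin N → ℝ)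
    (huk : uk = fun i => U i k) (hvk : vk = fun i => V i k)
    (hxa : xa = uk + (σ k)⁻¹ • (W₁.mulVec vk - vk))
    (hza : za = -((σ k)⁻¹ • vk))
    (hbig : σ k > 1 + l2OpNorm W₁)
    (hinv : IsUnit (1 - W)) :
    ∃ x : Fin N → ℝ, ‖euc x‖ = 1 ∧
      ‖euc ((1 - W)⁻¹.mulVec x)‖ ≤ 1 / (σ k - 1 - l2OpNorm W₁) := by
  have hσk : (0:ℝ) < σ k := hσ k
  -- unit norms
  have hu1 : ‖euc uk‖ = 1 := by
    have h : ∑ i, U i k * U i k = 1 := by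
      have := congrFun (congrFun hU k) k
      simpa [Matrix.mul_apply, Matrix.one_apply, Matrix.transpose_apply] using this
    rw [EuclideanSpace.norm_eq]
    have : ∑ i, ‖euc uk i‖ ^ 2 = 1 := by
      rw [← h]
      refine Finset.sum_congr rfl fun i _ => ?_
      simp [euc, huk, Real.norm_eq_abs, sq_abs, sq]
    rw [show (euc uk : Fin N → ℝ) = euc uk from rfl]
    simpa using congrArg Real.sqrt this
  have hv1 : ‖euc vk‖ = 1 := by
    have h : ∑ i, V i k * V i k = 1 := by
      have := congrFun (congrFun hV k) k
      simpa [Matrix.mul_apply, Matrix.one_apply, Matrix.transpose_apply] using this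
    rw [EuclideanSpace.norm_eq]
    have : ∑ i, ‖euc vk i‖ ^ 2 = 1 := by
      rw [← h]
      refine Finset.sum_congr rfl fun i _ => ?_
      simp [euc, hvk, Real.norm_eq_abs, sq_abs, sq]
    simpa using congrArg Real.sqrt this
  -- key algebraic identity
  have h1 : Vᵀ.mulVec vk = Pi.single k 1 := by
    funext j
    have h := congrFun (congrFun hV j) k
    rw [Matrix.mul_apply] at h
    simp only [Matrix.mulVec, dotProduct, hvk]
    rw [h, Matrix.one_apply, Pi.single_apply]
  have hWvk : W.mulVec vk = σ k • uk + W₁.mulVec vk := by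
    rw [hW, Matrix.add_mulVec]
    congr 1
    rw [← Matrix.mulVec_mulVec, ← Matrix.mulVec_mulVec, h1,
      Matrix.diagonal_mulVec_single, Matrix.mulVec_single]
    funext i
    simp [huk, mul_comm]
  have hAz : (1 - W).mulVec za = xa := by
    rw [hza, hxa, Matrix.sub_mulVec, Matrix.one_mulVec, Matrix.mulVec_neg,
      Matrix.mulVec_smul, hWvk]
    funext i
    simp only [Pi.add_apply, Pi.sub_apply, Pi.neg_apply, Pi.smul_apply, smul_eq_mul]
    field_simp
    ring
  have hdet : IsUnit (1 - W).det := (Matrix.isUnit_iff_isUnit_det _).mp hinv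
  have hres : (1 - W)⁻¹.mulVec xa = za := by
    rw [← hAz, Matrix.mulVec_mulVec, Matrix.nonsing_inv_mul _ hdet, Matrix.one_mulVec]
  -- norm of za
  have hza_norm : ‖euc za‖ = (σ k)⁻¹ := by
    have : euc za = -((σ k)⁻¹ • euc vk) := by rw [hza]; rfl
    rw [this, norm_neg, norm_smul, hv1, Real.norm_eq_abs, abs_of_pos (by positivity)]
    ring
  -- lower bound for xa
  have hxa_lb : (σ k - 1 - l2OpNorm W₁) / σ k ≤ ‖euc xa‖ := by
    have hxadecomp : euc xa = euc uk + (σ k)⁻¹ • euc (W₁.mulVec vk - vk) := by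
      rw [hxa]; rfl
    have h2 : ‖euc (W₁.mulVec vk - vk)‖ ≤ l2OpNorm W₁ + 1 := by
      have hsub : euc (W₁.mulVec vk - vk) = euc (W₁.mulVec vk) - euc vk := rfl
      rw [hsub]
      calc ‖euc (W₁.mulVec vk) - euc vk‖ ≤ ‖euc (W₁.mulVec vk)‖ + ‖euc vk‖ :=
            norm_sub_le _ _
        _ ≤ l2OpNorm W₁ * ‖euc vk‖ + ‖euc vk‖ := by
            linarith [euc_mulVec_le W₁ vk]
        _ = l2OpNorm W₁ + 1 := by rw [hv1]; ring
    have h3 : ‖euc uk‖ - ‖(σ k)⁻¹ • euc (W₁.mulVec vk - vk)‖ ≤ ‖euc xa‖ := by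
      rw [hxadecomp]
      have htri := norm_add_le (euc uk + (σ k)⁻¹ • euc (W₁.mulVec vk - vk))
        (-((σ k)⁻¹ • euc (W₁.mulVec vk - vk)))
      simp only [add_neg_cancel_right, norm_neg] at htri
      linarith
    have h4 : ‖(σ k)⁻¹ • euc (W₁.mulVec vk - vk)‖ ≤ (σ k)⁻¹ * (l2OpNorm W₁ + 1) := by
      rw [norm_smul, Real.norm_eq_abs, abs_of_pos (by positivity)]
      exact mul_le_mul_of_nonneg_left h2 (by positivity)
    have : 1 - (σ k)⁻¹ * (l2OpNorm W₁ + 1) ≤ ‖euc xa‖ := by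
      rw [hu1] at h3; linarith
    calc (σ k - 1 - l2OpNorm W₁) / σ k = 1 - (σ k)⁻¹ * (l2OpNorm W₁ + 1) := by
          field_simp
          ring
      _ ≤ ‖euc xa‖ := this
  have hpos : 0 < σ k - 1 - l2OpNorm W₁ := by linarith
  have hxa_pos : 0 < ‖euc xa‖ := lt_of_lt_of_le (by positivity) hxa_lb
  -- final vector
  refine ⟨‖euc xa‖⁻¹ • xa, ?_, ?_⟩
  · have : euc (‖euc xa‖⁻¹ • xa) = ‖euc xa‖⁻¹ • euc xa := rfl
    rw [this, norm_smul, Real.norm_eq_abs, abs_of_pos (by positivity),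
      inv_mul_cancel₀ hxa_pos.ne']
  · rw [Matrix.mulVec_smul, hres]
    have : euc (‖euc xa‖⁻¹ • za) = ‖euc xa‖⁻¹ • euc za := rfl
    rw [this, norm_smul, Real.norm_eq_abs, abs_of_pos (by positivity), hza_norm]
    rw [← mul_inv, one_div]
    apply inv_anti₀ hpos
    calc σ k - 1 - l2OpNorm W₁ = ((σ k - 1 - l2OpNorm W₁) / σ k) * σ k := by
          field_simp
      _ ≤ ‖euc xa‖ * σ k := by
          exact mul_le_mul_of_nonneg_right hxa_lb hσk.le
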